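/- arXiv:1806.07277 — 2 statements merged into one kernel-verified Lean document; each statement's English description precedes it below -/
import Mathlib

section
/- Let μ ∈ ℝ with μ ≠ 0, ω_f ∈ ℝ, and define v(x,y,z,t) = e^{-μ(x+y+z)/U₀}·e^{μt}·∫₀ᵗ e^{-μτ} sin(ω_f τ) dτ for t ≥ 0, where U₀ > 0. If ω_f ≠ 0, then for each fixed (x,y,z), limsup_{t→∞} log|v(x,y,z,t)|/t = μ when μ > 0, i.e., the exponential growth rate of v equals μ. -/
open Filter

/-- For `μ > 0`, `ω_f ≠ 0` and
`v(x,y,z,t) = e^{-μ(x+y+z)/U₀}·e^{μt}·∫₀ᵗ e^{-μτ} sin(ω_f τ)dτ`, the exponential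
growth rate of `v` equals `μ`: `limsup_{t→∞} log|v(x,y,z,t)|/t = μ`. -/
theorem stmt_14 (U₀ μ ωf : ℝ) (hU : 0 < U₀) (hμ : μ ≠ 0) (hμpos : 0 < μ)
    (hω : ωf ≠ 0)
    (v : ℝ → ℝ → ℝ → ℝ → ℝ)
    (hv : v = fun x y z t =>
      Real.exp (-μ * (x + y + z) / U₀) * Real.exp (μ * t)
        * ∫ τ in (0:ℝ)..t, Real.exp (-μ * τ) * Real.sin (ωf * τ)) :
    ∀ x y z : ℝ,
      limsup (fun t : ℝ => Real.log |v x y z t| / t) atTop = μ := by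
  intro x y z
  set D : ℝ := μ^2 + ωf^2 with hDdef
  have hD0 : 0 < D := by positivity
  set L : ℝ := ωf / D with hLdef
  have hL : L ≠ 0 := div_ne_zero hω hD0.ne'
  set F : ℝ → ℝ := fun τ =>
    Real.exp (-μ*τ) * (-μ * Real.sin (ωf*τ) - ωf * Real.cos (ωf*τ)) / D with hFdef
  have hF : ∀ τ : ℝ, HasDerivAt F (Real.exp (-μ*τ) * Real.sin (ωf*τ)) τ := by
    intro τ
    have he : HasDerivAt (fun τ : ℝ => Real.exp (-μ*τ)) (Real.exp (-μ*τ) * (-μ)) τ := by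
      simpa using (((hasDerivAt_id τ).const_mul (-μ)).exp)
    have hs : HasDerivAt (fun τ : ℝ => Real.sin (ωf*τ)) (Real.cos (ωf*τ) * ωf) τ := by
      simpa using (((hasDerivAt_id τ).const_mul ωf).sin)
    have hc : HasDerivAt (fun τ : ℝ => Real.cos (ωf*τ)) (-Real.sin (ωf*τ) * ωf) τ := by
      simpa using (((hasDerivAt_id τ).const_mul ωf).cos)
    have h1 := ((he.mul ((hs.const_mul (-μ)).sub (hc.const_mul ωf)))).div_const D
    refine h1.congr_deriv ?_
    field_simp
    simp only [Pi.sub_apply, hDdef]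
    ring
  have hInt : ∀ t : ℝ,
      (∫ τ in (0:ℝ)..t, Real.exp (-μ * τ) * Real.sin (ωf * τ)) = F t + L := by
    intro t
    have hcont : IntervalIntegrable (fun τ => Real.exp (-μ * τ) * Real.sin (ωf * τ))
        MeasureTheory.volume 0 t := by
      apply Continuous.intervalIntegrable
      fun_prop
    have := intervalIntegral.integral_eq_sub_of_hasDerivAt
      (fun τ _ => hF τ) hcont
    rw [this]
    simp [hFdef, hLdef]
    ring
  set I : ℝ → ℝ := fun t => ∫ τ in (0:ℝ)..t, Real.exp (-μ * τ) * Real.sin (ωf * τ) with hIdef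
  have hFtend : Tendsto F atTop (nhds 0) := by
    apply squeeze_zero_norm (a := fun t => Real.exp (-μ*t) * (|μ| + |ωf|) / D)
    · intro t
      simp only [hFdef]
      rw [Real.norm_eq_abs, abs_div, abs_of_pos hD0, abs_mul, Real.abs_exp]
      gcongr
      calc |(-μ * Real.sin (ωf*t) - ωf * Real.cos (ωf*t))|
          ≤ |(-μ * Real.sin (ωf*t))| + |(ωf * Real.cos (ωf*t))| := abs_sub _ _
        _ ≤ |μ| * 1 + |ωf| * 1 := by
            rw [abs_mul, abs_mul, abs_neg]
            gcongr <;> first | exact Real.abs_sin_le_one _ | exact Real.abs_cos_le_one _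
        _ = |μ| + |ωf| := by ring
    · have h1 : Tendsto (fun t : ℝ => -μ*t) atTop atBot := by
        have : Tendsto (fun t : ℝ => μ*t) atTop atTop :=
          Tendsto.const_mul_atTop hμpos tendsto_id
        simpa [Function.comp_def, neg_mul] using tendsto_neg_atTop_atBot.comp this
      have h2 : Tendsto (fun t : ℝ => Real.exp (-μ*t)) atTop (nhds 0) :=
        Real.tendsto_exp_atBot.comp h1
      simpa using (h2.mul_const (|μ| + |ωf|)).div_const D
  have hItend : Tendsto I atTop (nhds L) := by
    have : Tendsto (fun t => F t + L) atTop (nhds (0 + L)) := hFtend.add_const L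
    simp only [zero_add] at this
    exact Tendsto.congr (fun t => (hInt t).symm) this
  have hIne : ∀ᶠ t in atTop, I t ≠ 0 := hItend.eventually_ne hL
  set C : ℝ := Real.exp (-μ * (x + y + z) / U₀) with hCdef
  have hC : 0 < C := Real.exp_pos _
  have hmain : Tendsto (fun t : ℝ => Real.log |v x y z t| / t) atTop (nhds μ) := by
    have heq : ∀ᶠ t in atTop, Real.log |v x y z t| / t
        = Real.log C / t + μ + Real.log |I t| / t := by
      filter_upwards [hIne, eventually_gt_atTop (0:ℝ)] with t hne ht
      have hvt : v x y z t = C * Real.exp (μ*t) * I t := by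
        rw [hv]
      rw [hvt, abs_mul, abs_mul, abs_of_pos hC, Real.abs_exp,
        Real.log_mul (by positivity) (abs_ne_zero.2 hne),
        Real.log_mul hC.ne' (Real.exp_ne_zero _), Real.log_exp]
      field_simp
      rw [Real.log_exp]
      ring
    have h1 : Tendsto (fun t : ℝ => Real.log C / t) atTop (nhds 0) :=
      tendsto_const_nhds.div_atTop tendsto_id
    have h2 : Tendsto (fun t : ℝ => Real.log |I t| / t) atTop (nhds 0) := by
      have habs : Tendsto (fun t => |I t|) atTop (nhds |L|) := hItend.abs
      have hlog : Tendsto (fun t => Real.log |I t|) atTop (nhds (Real.log |L|)) :=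
        (Real.continuousAt_log (abs_ne_zero.2 hL)).tendsto.comp habs
      exact hlog.div_atTop tendsto_id
    have h3 : Tendsto (fun t : ℝ => Real.log C / t + μ + Real.log |I t| / t)
        atTop (nhds (0 + μ + 0)) := (h1.add_const μ).add h2
    simp only [zero_add, add_zero] at h3
    exact Tendsto.congr' (heq.mono fun t h => h.symm) h3
  exact hmain.limsup_eq
end

section
/- Let k₁,…,k₄, l₁,…,l₄, m₁,…,m₄ be reals with k₁k₂k₃k₄ ≠ 0, and let Δ = (c₀ρ₀/(k₃k₄))·[√(k₁²+l₁²+m₁²)(k₂k₃k₄ + k₃m₂m₄ + k₄l₂l₃) + √(k₂²+l₂²+m₂²)(k₁k₃k₄ + k₃m₁m₄ + k₄l₁l₃)] ≠ 0. Consider the linear map T: (C¹(ℝ))⁴ → (C¹(ℝ))⁴ sending (f₁,f₂,f₃,f₄) to the restrictions to the x-axis ξ ↦ (F(ξ/k₁,0,0), G(ξ/k₁,0,0), H(ξ/k₁,0,0), P(ξ/k₁,0,0)) when all arguments Lᵢ are evaluated with y = z = 0 and kᵢ = k₁ (so that Lᵢ = k₁x = ξ). Then for any (F̃,G̃,H̃,P̃)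 in the image of T there exists a unique (f₁,f₂,f₃,f₄) with T(f₁,f₂,f₃,f₄) = (F̃,G̃,H̃,P̃); in particular, if the 4×4 coefficient matrix M with rows (k₁, k₂, l₃/k₃, m₄/k₄), (l₁, l₂, -1, 0), (m₁, m₂, 0, -1), (-c₀ρ₀r₁, c₀ρ₀r₂, 0, 0) (rᵢ = √(kᵢ²+lᵢ²+mᵢ²)) has determinant ±Δ ≠ 0, then M is invertible. -/
/-- The coefficient matrix `M` of the representation formula (13) has
determinant `Δ` (up to sign, here the sign is `+`); hence if `Δ ≠ 0` then `M` is
invertible, so the representation of initial data by `(f₁,f₂,f₃,f₄)` is unique. -/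
theorem stmt_17 (c₀ ρ₀ : ℝ) (hc : 0 < c₀) (hρ : 0 < ρ₀)
    (k₁ k₂ k₃ k₄ l₁ l₂ l₃ l₄ m₁ m₂ m₃ m₄ : ℝ)
    (hk : k₁ * k₂ * k₃ * k₄ ≠ 0)
    (r₁ r₂ : ℝ)
    (hr₁ : r₁ = Real.sqrt (k₁ ^ 2 + l₁ ^ 2 + m₁ ^ 2))
    (hr₂ : r₂ = Real.sqrt (k₂ ^ 2 + l₂ ^ 2 + m₂ ^ 2))
    (Δ : ℝ)
    (hΔdef : Δ = (c₀ * ρ₀ / (k₃ * k₄))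
      * (r₁ * (k₂ * k₃ * k₄ + k₃ * m₂ * m₄ + k₄ * l₂ * l₃)
        + r₂ * (k₁ * k₃ * k₄ + k₃ * m₁ * m₄ + k₄ * l₁ * l₃)))
    (hΔ : Δ ≠ 0)
    (M : Matrix (Fin 4) (Fin 4) ℝ)
    (hM : M = !![k₁, k₂, l₃ / k₃, m₄ / k₄;
                 l₁, l₂, -1, 0;
                 m₁, m₂, 0, -1;
                 -(c₀ * ρ₀ * r₁), c₀ * ρ₀ * r₂, 0, 0]) :
    (M.det = Δ ∨ M.det = -Δ) ∧ IsUnit M := by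
  have hk3 : k₃ ≠ 0 := fun h => hk (by simp [h])
  have hk4 : k₄ ≠ 0 := fun h => hk (by simp [h])
  have hdet : M.det = Δ := by
    subst hM hΔdef
    simp [Matrix.det_succ_row_zero, Fin.sum_univ_succ, Fin.succAbove]
    field_simp
    ring
  exact ⟨Or.inl hdet, (Matrix.isUnit_iff_isUnit_det M).mpr (hdet ▸ hΔ.isUnit)⟩
end
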